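/- Completeness of violation classes (Lemma 2, violation part): Let φ be an STL formula with a classification criterion fixed as in the context. For every signal w with w ⊭ φ, there exists a violation class ψ ∈ Cls⁻(φ) such that w ∈ V(ψ), i.e. there exists a valuation θ ∈ Θ with w ⊭ ψ(θ). -/

import Mathlib

namespace STLClass

abbrev Signal (N : ℕ) := ℝ → Fin N → ℝ

def shift {N : ℕ} (w : Signal N) (t : ℝ) : Signal N := fun t' => w (t + t')

inductive STL (N : ℕ) : Type where
  | atom (f : (Fin N → ℝ) → ℝ)
  | falsum
  | not (φ : STL N)
  | and (φ₁ φ₂ : STL N)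
  | or (φ₁ φ₂ : STL N)
  | always (a b : ℝ) (φ : STL N)
  | event (a b : ℝ) (φ : STL N)
  | untl (a b : ℝ) (φ₁ φ₂ : STL N)

def STL.top {N : ℕ} : STL N := .not .falsum

noncomputable def robust {N : ℕ} : STL N → Signal N → EReal
  | .atom f, w => ((f (w 0) : ℝ) : EReal)
  | .falsum, _ => ⊥
  | .not φ, w => - robust φ w
  | .and φ₁ φ₂, w => min (robust φ₁ w) (robust φ₂ w)
  | .or φ₁ φ₂, w => max (robust φ₁ w) (robust φ₂ w)
  | .always a b φ, w => ⨅ t : Set.Icc a b, robust φ (shift w t.1)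
  | .event a b φ, w => ⨆ t : Set.Icc a b, robust φ (shift w t.1)
  | .untl a b φ₁ φ₂, w =>
      ⨆ t : Set.Icc a b,
        min (robust φ₂ (shift w t.1)) (⨅ t' : Set.Ico (0 : ℝ) t.1, robust φ₁ (shift w t'.1))

def Sat {N : ℕ} (w : Signal N) (φ : STL N) : Prop := 0 < robust φ w

def Vio {N : ℕ} (w : Signal N) (φ : STL N) : Prop := robust φ w < 0

/-- An STL formula together with a classification criterion: each temporal operator is
annotated with a natural number `k`, meaning that its interval is split into `k + 1`
consecutive segments (so the "positive integer" of the criterion is `k + 1`). -/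
inductive AForm (N : ℕ) : Type where
  | atom (f : (Fin N → ℝ) → ℝ)
  | falsum
  | not (φ : AForm N)
  | and (φ₁ φ₂ : AForm N)
  | or (φ₁ φ₂ : AForm N)
  | always (a b : ℝ) (k : ℕ) (φ : AForm N)
  | event (a b : ℝ) (k : ℕ) (φ : AForm N)
  | untl (a b : ℝ) (k : ℕ) (φ₁ φ₂ : AForm N)

/-- The underlying STL formula of an annotated formula. -/
def AForm.toSTL {N : ℕ} : AForm N → STL N
  | .atom f => .atom f
  | .falsum => .falsum
  | .not φ => .not φ.toSTL
  | .and φ₁ φ₂ => .and φ₁.toSTL φ₂.toSTL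
  | .or φ₁ φ₂ => .or φ₁.toSTL φ₂.toSTL
  | .always a b _ φ => .always a b φ.toSTL
  | .event a b _ φ => .event a b φ.toSTL
  | .untl a b _ φ₁ φ₂ => .untl a b φ₁.toSTL φ₂.toSTL

/-- Well-formedness: every temporal interval `[a, b]` satisfies `0 ≤ a < b`. -/
def AForm.WF {N : ℕ} : AForm N → Prop
  | .atom _ => True
  | .falsum => True
  | .not φ => φ.WF
  | .and φ₁ φ₂ => φ₁.WF ∧ φ₂.WF
  | .or φ₁ φ₂ => φ₁.WF ∧ φ₂.WF
  | .always a b _ φ => 0 ≤ a ∧ a < b ∧ φ.WF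
  | .event a b _ φ => 0 ≤ a ∧ a < b ∧ φ.WF
  | .untl a b _ φ₁ φ₂ => 0 ≤ a ∧ a < b ∧ φ₁.WF ∧ φ₂.WF

/-- A split of the interval `[a, b]` into `n` consecutive nonsingular segments:
`n + 1` strictly increasing points starting at `a` and ending at `b`.  The segment
`i` is `[pts i.castSucc, pts i.succ]`. -/
structure Split (a b : ℝ) (n : ℕ) : Type where
  pts : Fin (n + 1) → ℝ
  strictMono : StrictMono pts
  first : pts 0 = a
  last : pts (Fin.last n) = b

/-- The valuation space `Θ` of an annotated formula: a choice of admissible breakpoints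
for each temporal subformula. -/
def Val {N : ℕ} : AForm N → Type
  | .atom _ => PUnit
  | .falsum => PUnit
  | .not φ => Val φ
  | .and φ₁ φ₂ => Val φ₁ × Val φ₂
  | .or φ₁ φ₂ => Val φ₁ × Val φ₂
  | .always a b k φ => Split a b (k + 1) × Val φ
  | .event a b k φ => Split a b (k + 1) × Val φ
  | .untl a b k φ₁ φ₂ => Split a b (k + 1) × Val φ₁ × Val φ₂

/-- Finite conjunction of a list of STL formulas (empty conjunction is `⊤`). -/
def listAnd {N : ℕ} : List (STL N) → STL N
  | [] => STL.top
  | [φ] => φ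
  | φ :: φ' :: rest => .and φ (listAnd (φ' :: rest))

/-- Finite disjunction of a list of STL formulas (empty disjunction is `⊥`). -/
def listOr {N : ℕ} : List (STL N) → STL N
  | [] => .falsum
  | [φ] => φ
  | φ :: φ' :: rest => .or φ (listOr (φ' :: rest))

/-- `⋀_{i} f i`. -/
def iAnd {N : ℕ} {k : ℕ} (f : Fin k → STL N) : STL N := listAnd (List.ofFn f)

/-- `⋁_{i} f i`. -/
def iOr {N : ℕ} {k : ℕ} (f : Fin k → STL N) : STL N := listOr (List.ofFn f)

/-- `Cls true φ` is the set `Cls⁺(φ)` of satisfaction classes and `Cls false φ` is the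
set `Cls⁻(φ)` of violation classes; a class is represented by its instantiation map
`Θ → STL N` sending a valuation `θ` to the STL formula `ψ(θ)`. -/
def Cls {N : ℕ} : Bool → (φ : AForm N) → Set (Val φ → STL N)
  | b, .atom f =>
      {fun _ => if b then STL.falsum else STL.top, fun _ => STL.atom f}
  | _, .falsum => {fun _ => STL.falsum}
  | b, .not φ =>
      {c | ∃ ψ ∈ Cls (!b) φ, c = fun θ => STL.not (ψ θ)}
  | b, .and φ₁ φ₂ =>
      {c | ∃ ψ₁ ∈ Cls b φ₁, ∃ ψ₂ ∈ Cls b φ₂,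
        c = fun θ => STL.and (ψ₁ θ.1) (ψ₂ θ.2)}
  | b, .or φ₁ φ₂ =>
      {c | ∃ ψ₁ ∈ Cls b φ₁, ∃ ψ₂ ∈ Cls b φ₂,
        c = fun θ => STL.or (ψ₁ θ.1) (ψ₂ θ.2)}
  | b, .always _ _ k φ =>
      {c | ∃ ψ : Fin (k + 1) → Val φ → STL N, (∀ i, ψ i ∈ Cls b φ) ∧
        c = fun θ => iAnd fun i : Fin (k + 1) =>
          STL.always (θ.1.pts i.castSucc) (θ.1.pts i.succ) (ψ i θ.2)}
  | b, .event _ _ k φ =>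
      {c | ∃ ψ : Fin (k + 1) → Val φ → STL N, (∀ i, ψ i ∈ Cls b φ) ∧
        c = fun θ => iOr fun i : Fin (k + 1) =>
          STL.event (θ.1.pts i.castSucc) (θ.1.pts i.succ) (ψ i θ.2)}
  | b, .untl _ _ k φ₁ φ₂ =>
      {c | ∃ ψ : Fin (k + 1) → Val φ₁ → STL N, ∃ σ : Fin (k + 1) → Val φ₂ → STL N,
           ∃ ξ : Fin (k + 1) → Fin (k + 1) → Val φ₁ → STL N,
        (∀ i, ψ i ∈ Cls b φ₁) ∧ (∀ i, σ i ∈ Cls b φ₂) ∧ (∀ i j, ξ i j ∈ Cls b φ₁) ∧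
        c = fun θ => iOr fun i : Fin (k + 1) =>
          STL.and
            (STL.untl (θ.1.pts i.castSucc) (θ.1.pts i.succ) (ψ i θ.2.1) (σ i θ.2.2))
            (iAnd fun j : Fin (i : ℕ) =>
              STL.always (θ.1.pts (j.castLE i.isLt.le).castSucc)
                (θ.1.pts (j.castLE i.isLt.le).succ) (ξ i (j.castLE i.isLt.le) θ.2.1))}

/-- The satisfiable set `S(ψ)` of a class. -/
def SatSet {N : ℕ} (φ : AForm N) (ψ : Val φ → STL N) : Set (Signal N) :=
  {w | ∃ θ : Val φ, Sat w (ψ θ)}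

/-- The falsifiable set `V(ψ)` of a class. -/
def VioSet {N : ℕ} (φ : AForm N) (ψ : Val φ → STL N) : Set (Signal N) :=
  {w | ∃ θ : Val φ, Vio w (ψ θ)}


/-! ### Auxiliary lemmas for the completeness proof -/

section Aux

lemma robust_top {N : ℕ} (w : Signal N) : robust (STL.top (N := N)) w = ⊤ := by
  simp [STL.top, robust]

lemma robust_listAnd_cons {N : ℕ} (φ : STL N) (l : List (STL N)) (w : Signal N) :
    robust (listAnd (φ :: l)) w = min (robust φ w) (robust (listAnd l) w) := by
  cases l with
  | nil => simp [listAnd, robust_top]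
  | cons a l => rfl

lemma robust_listOr_cons {N : ℕ} (φ : STL N) (l : List (STL N)) (w : Signal N) :
    robust (listOr (φ :: l)) w = max (robust φ w) (robust (listOr l) w) := by
  cases l with
  | nil => simp [listOr, robust]
  | cons a l => rfl

lemma iInf_fin_succ' {α : Type*} [CompleteLattice α] {k : ℕ} (g : Fin (k + 1) → α) :
    ⨅ i, g i = g 0 ⊓ ⨅ i : Fin k, g i.succ := by
  apply le_antisymm
  · exact le_inf (iInf_le _ 0) (le_iInf fun i => iInf_le _ _)
  · refine le_iInf fun i => ?_
    cases i using Fin.cases with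
    | zero => exact inf_le_left
    | succ i => exact inf_le_right.trans (iInf_le _ i)

lemma iSup_fin_succ' {α : Type*} [CompleteLattice α] {k : ℕ} (g : Fin (k + 1) → α) :
    ⨆ i, g i = g 0 ⊔ ⨆ i : Fin k, g i.succ := by
  apply le_antisymm
  · refine iSup_le fun i => ?_
    cases i using Fin.cases with
    | zero => exact le_sup_left
    | succ i => exact (le_iSup (fun i : Fin k => g i.succ) i).trans le_sup_right
  · exact sup_le (le_iSup _ 0) (iSup_le fun i => le_iSup _ _)

lemma robust_iAnd {N k : ℕ} (f : Fin k → STL N) (w : Signal N) :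
    robust (iAnd f) w = ⨅ i, robust (f i) w := by
  induction k with
  | zero => simp [iAnd, listAnd, robust_top, iInf_of_isEmpty]
  | succ k ih =>
      rw [iAnd, List.ofFn_succ, robust_listAnd_cons,
        show listAnd (List.ofFn fun i : Fin k => f i.succ) = iAnd fun i : Fin k => f i.succ
          from rfl, ih, iInf_fin_succ' fun i => robust (f i) w]

lemma robust_iOr {N k : ℕ} (f : Fin k → STL N) (w : Signal N) :
    robust (iOr f) w = ⨆ i, robust (f i) w := by
  induction k with
  | zero => simp [iOr, listOr, robust, iSup_of_empty]
  | succ k ih =>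
      rw [iOr, List.ofFn_succ, robust_listOr_cons,
        show listOr (List.ofFn fun i : Fin k => f i.succ) = iOr fun i : Fin k => f i.succ
          from rfl, ih, iSup_fin_succ' fun i => robust (f i) w]

/-- The uniform split of `[a, b]` into `n + 1` equal segments. -/
noncomputable def uniformSplit (a b : ℝ) (h : a < b) (n : ℕ) : Split a b (n + 1) where
  pts i := a + (i : ℕ) * ((b - a) / (n + 1))
  strictMono := by
    intro i j hij
    have hc : (0 : ℝ) < (b - a) / (n + 1) :=
      div_pos (by linarith) (by positivity)
    have : ((i : ℕ) : ℝ) < ((j : ℕ) : ℝ) := by exact_mod_cast hij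
    nlinarith
  first := by simp
  last := by
    have hn : ((n : ℝ) + 1) ≠ 0 := by positivity
    simp only [Fin.val_last]
    push_cast
    field_simp
    ring

lemma Split.pts_mem {a b : ℝ} {n : ℕ} (s : Split a b n) (i : Fin (n + 1)) :
    s.pts i ∈ Set.Icc a b := by
  exact ⟨s.first.symm.le.trans (s.strictMono.monotone (Fin.zero_le i)),
    (s.strictMono.monotone (Fin.le_last i)).trans s.last.le⟩

lemma Split.seg_subset {a b : ℝ} {n : ℕ} (s : Split a b (n + 1)) (i : Fin (n + 1)) :
    Set.Icc (s.pts i.castSucc) (s.pts i.succ) ⊆ Set.Icc a b := fun t ht =>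
  ⟨(s.pts_mem i.castSucc).1.trans ht.1, ht.2.trans (s.pts_mem i.succ).2⟩

lemma Split.exists_seg {a b : ℝ} {n : ℕ} (s : Split a b (n + 1)) {t : ℝ}
    (ht : t ∈ Set.Icc a b) :
    ∃ i : Fin (n + 1), t ∈ Set.Icc (s.pts i.castSucc) (s.pts i.succ) ∧
      ∀ j : Fin (n + 1), j < i → s.pts j.succ < t := by
  classical
  set P : ℕ → Prop := fun m => ∃ h : m < n + 1, t ≤ s.pts (Fin.succ ⟨m, h⟩) with hP
  have hPn : P n := by
    refine ⟨n.lt_succ_self, ?_⟩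
    have : (Fin.succ ⟨n, n.lt_succ_self⟩ : Fin (n + 2)) = Fin.last (n + 1) := by
      ext; simp
    rw [this, s.last]; exact ht.2
  have hex : ∃ m, P m := ⟨n, hPn⟩
  set m := Nat.find hex with hm
  obtain ⟨hmlt, hmle⟩ := Nat.find_spec hex
  refine ⟨⟨m, hmlt⟩, ⟨?_, hmle⟩, ?_⟩
  · rcases Nat.eq_zero_or_pos m with h0 | hpos
    · have : (Fin.castSucc (⟨m, hmlt⟩ : Fin (n + 1))) = (0 : Fin (n + 2)) := by
        ext; simp [h0]
      rw [this, show s.pts 0 = a from s.first]; exact ht.1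
    · have hlt : m - 1 < m := Nat.sub_lt hpos one_pos
      have hnot := Nat.find_min hex hlt
      have hm1 : m - 1 < n + 1 := lt_trans hlt hmlt
      have h2 : s.pts (Fin.succ ⟨m - 1, hm1⟩) < t :=
        not_le.mp fun hle => hnot ⟨hm1, hle⟩
      have heq : (Fin.succ ⟨m - 1, hm1⟩ : Fin (n + 2)) = Fin.castSucc ⟨m, hmlt⟩ := by
        ext
        simp only [Fin.val_succ, Fin.coe_castSucc]
        omega
      rw [heq] at h2
      exact h2.le
  · intro j hj
    have hjm : (j : ℕ) < m := hj
    have hnot := Nat.find_min hex hjm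
    have h2 : s.pts (Fin.succ ⟨(j : ℕ), j.isLt⟩) < t :=
      not_le.mp fun hle => hnot ⟨j.isLt, hle⟩
    have heq : (Fin.succ ⟨(j : ℕ), j.isLt⟩ : Fin (n + 2)) = j.succ := by
      ext; simp
    rw [heq] at h2
    exact h2

lemma iInf_split_seg {α : Type*} [CompleteLattice α] {a b : ℝ} {n : ℕ}
    (s : Split a b (n + 1)) (g : ℝ → α) :
    ⨅ t : Set.Icc a b, g t =
      ⨅ i : Fin (n + 1), ⨅ t : Set.Icc (s.pts i.castSucc) (s.pts i.succ), g t := by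
  apply le_antisymm
  · exact le_iInf fun i => le_iInf fun t => iInf_le_of_le ⟨t.1, s.seg_subset i t.2⟩ le_rfl
  · refine le_iInf fun t => ?_
    obtain ⟨i, hti, -⟩ := s.exists_seg t.2
    exact iInf_le_of_le i (iInf_le_of_le ⟨t.1, hti⟩ le_rfl)

lemma iSup_split_seg {α : Type*} [CompleteLattice α] {a b : ℝ} {n : ℕ}
    (s : Split a b (n + 1)) (g : ℝ → α) :
    ⨆ t : Set.Icc a b, g t =
      ⨆ i : Fin (n + 1), ⨆ t : Set.Icc (s.pts i.castSucc) (s.pts i.succ), g t := by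
  apply le_antisymm
  · refine iSup_le fun t => ?_
    obtain ⟨i, hti, -⟩ := s.exists_seg t.2
    exact le_iSup_of_le i (le_iSup_of_le ⟨t.1, hti⟩ le_rfl)
  · exact iSup_le fun i => iSup_le fun t => le_iSup_of_le ⟨t.1, s.seg_subset i t.2⟩ le_rfl

lemma until_split {a b : ℝ} {n : ℕ} (s : Split a b (n + 1)) (ha : 0 ≤ a)
    (R P : ℝ → EReal) :
    (⨆ i : Fin (n + 1),
      min
        (⨆ t : Set.Icc (s.pts i.castSucc) (s.pts i.succ),
          min (P t.1) (⨅ t' : Set.Ico (0 : ℝ) t.1, R t'.1))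
        (⨅ j : Fin (i : ℕ),
          ⨅ t : Set.Icc (s.pts (j.castLE i.isLt.le).castSucc)
            (s.pts (j.castLE i.isLt.le).succ), R t.1))
    = ⨆ t : Set.Icc a b, min (P t.1) (⨅ t' : Set.Ico (0 : ℝ) t.1, R t'.1) := by
  apply le_antisymm
  · refine iSup_le fun i => (min_le_left _ _).trans (iSup_le fun t => ?_)
    exact le_iSup_of_le ⟨t.1, s.seg_subset i t.2⟩ le_rfl
  · refine iSup_le fun t => ?_
    obtain ⟨i, hti, hmin⟩ := s.exists_seg t.2
    refine le_iSup_of_le i (le_min (le_iSup_of_le ⟨t.1, hti⟩ le_rfl) ?_)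
    refine le_iInf fun j => le_iInf fun t' => ?_
    refine (min_le_right _ _).trans (iInf_le_of_le ⟨t'.1, ?_, ?_⟩ le_rfl)
    · exact le_trans (ha.trans (s.pts_mem _).1) t'.2.1
    · refine lt_of_le_of_lt t'.2.2 (hmin (j.castLE i.isLt.le) ?_)
      exact Fin.lt_def.mpr j.isLt

lemma canonical {N : ℕ} (φ : AForm N) : ∀ (pol : Bool), φ.WF →
    ∃ ψ ∈ Cls pol φ, ∃ θ : Val φ, ∀ w, robust (ψ θ) w = robust φ.toSTL w := by
  induction φ with
  | atom f =>
      exact fun pol _ =>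
        ⟨fun _ => .atom f, Set.mem_insert_iff.2 (Or.inr rfl), PUnit.unit, fun w => rfl⟩
  | falsum => exact fun pol _ => ⟨fun _ => .falsum, rfl, PUnit.unit, fun w => rfl⟩
  | not φ ih =>
      intro pol hφ
      obtain ⟨ψ, hm, θ, he⟩ := ih (!pol) hφ
      exact ⟨fun θ => .not (ψ θ), ⟨ψ, hm, rfl⟩, θ, fun w => by
        simp only [robust, AForm.toSTL, he w]⟩
  | and φ₁ φ₂ ih₁ ih₂ =>
      intro pol hφ
      obtain ⟨ψ₁, h₁, θ₁, e₁⟩ := ih₁ pol hφ.1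
      obtain ⟨ψ₂, h₂, θ₂, e₂⟩ := ih₂ pol hφ.2
      exact ⟨_, ⟨ψ₁, h₁, ψ₂, h₂, rfl⟩, (θ₁, θ₂), fun w => by
        simp only [robust, AForm.toSTL, e₁ w, e₂ w]⟩
  | or φ₁ φ₂ ih₁ ih₂ =>
      intro pol hφ
      obtain ⟨ψ₁, h₁, θ₁, e₁⟩ := ih₁ pol hφ.1
      obtain ⟨ψ₂, h₂, θ₂, e₂⟩ := ih₂ pol hφ.2
      exact ⟨_, ⟨ψ₁, h₁, ψ₂, h₂, rfl⟩, (θ₁, θ₂), fun w => by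
        simp only [robust, AForm.toSTL, e₁ w, e₂ w]⟩
  | always a b k φ ih =>
      intro pol hφ
      obtain ⟨ha, hab, hwf⟩ := hφ
      obtain ⟨ψ, hm, θ, he⟩ := ih pol hwf
      refine ⟨_, ⟨fun _ => ψ, fun _ => hm, rfl⟩, (uniformSplit a b hab k, θ), fun w => ?_⟩
      rw [robust_iAnd]
      simp only [robust, AForm.toSTL, he]
      exact (iInf_split_seg (uniformSplit a b hab k)
        fun t => robust φ.toSTL (shift w t)).symm
  | event a b k φ ih =>
      intro pol hφ
      obtain ⟨ha, hab, hwf⟩ := hφ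
      obtain ⟨ψ, hm, θ, he⟩ := ih pol hwf
      refine ⟨_, ⟨fun _ => ψ, fun _ => hm, rfl⟩, (uniformSplit a b hab k, θ), fun w => ?_⟩
      rw [robust_iOr]
      simp only [robust, AForm.toSTL, he]
      exact (iSup_split_seg (uniformSplit a b hab k)
        fun t => robust φ.toSTL (shift w t)).symm
  | untl a b k φ₁ φ₂ ih₁ ih₂ =>
      intro pol hφ
      obtain ⟨ha, hab, hwf₁, hwf₂⟩ := hφ
      obtain ⟨ψ₁, h₁, θ₁, e₁⟩ := ih₁ pol hwf₁
      obtain ⟨ψ₂, h₂, θ₂, e₂⟩ := ih₂ pol hwf₂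
      refine ⟨_, ⟨fun _ => ψ₁, fun _ => ψ₂, fun _ _ => ψ₁,
        fun _ => h₁, fun _ => h₂, fun _ _ => h₁, rfl⟩,
        (uniformSplit a b hab k, θ₁, θ₂), fun w => ?_⟩
      rw [robust_iOr]
      simp only [robust, AForm.toSTL, robust_iAnd, e₁, e₂]
      exact until_split (uniformSplit a b hab k) ha
        (fun t => robust φ₁.toSTL (shift w t)) (fun t => robust φ₂.toSTL (shift w t))

end Aux

/-- Completeness of violation classes (Lemma 2, violation part): if `w ⊭ φ`,
then there is a violation class `ψ ∈ Cls⁻(φ)` with `w ∈ V(ψ)`, i.e. `w ⊭ ψ(θ)`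
for some valuation `θ ∈ Θ`. -/
theorem vio_class_complete {N : ℕ} (φ : AForm N) (hφ : φ.WF) (w : Signal N)
    (hw : Vio w φ.toSTL) :
    ∃ ψ ∈ Cls false φ, ∃ θ : Val φ, Vio w (ψ θ) := by
  obtain ⟨ψ, hm, θ, he⟩ := canonical φ false hφ
  exact ⟨ψ, hm, θ, by rw [Vio, he w]; exact hw⟩

end STLClass
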